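/- For every positive integer n there exists a constant M > 0, depending only on n, such that for all real c > 0 one has 1 - (n+1)·∫_0^{1/c} (1-cu)^n/(1+u)^{n+2} du ≤ M·c. -/

import Mathlib

open MeasureTheory intervalIntegral

lemma ftc_aux (k : ℕ) (hk : 0 < k) (T : ℝ) (hT : 0 ≤ T) :
    ∫ u in (0:ℝ)..T, ((1:ℝ)+u)^(-(k:ℤ)-1) = (1 - (1+T)^(-(k:ℤ)))/k := by
  have hderiv : ∀ u ∈ Set.uIcc (0:ℝ) T,
      HasDerivAt (fun u => -((1:ℝ)+u)^(-(k:ℤ))/k) ((1+u)^(-(k:ℤ)-1)) u := by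
    intro u hu
    rw [Set.uIcc_of_le hT] at hu
    have hpos : (0:ℝ) < 1 + u := by linarith [hu.1]
    have h1 : HasDerivAt (fun u : ℝ => (1:ℝ)+u) 1 u := (hasDerivAt_id u).const_add 1
    have h2 := ((hasDerivAt_zpow (-(k:ℤ)) (1+u) (Or.inl hpos.ne')).comp u h1).neg.div_const (k:ℝ)
    have hk' : (k:ℝ) ≠ 0 := by positivity
    refine h2.congr_deriv ?_
    push_cast
    field_simp
  have hcont : IntervalIntegrable (fun u => ((1:ℝ)+u)^(-(k:ℤ)-1)) volume 0 T := by
    apply ContinuousOn.intervalIntegrable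
    apply ContinuousOn.zpow₀ (by fun_prop)
    intro x hx
    rw [Set.uIcc_of_le hT] at hx
    exact Or.inl (by nlinarith [hx.1])
  rw [intervalIntegral.integral_eq_sub_of_hasDerivAt hderiv hcont]
  have : ((1:ℝ)+0) = 1 := by ring
  rw [this, one_zpow]
  field_simp
  ring

lemma intg_aux (k : ℕ) (T : ℝ) (hT : 0 ≤ T) :
    IntervalIntegrable (fun u => ((1:ℝ)+u)^(-(k:ℤ)-1)) volume 0 T := by
  apply ContinuousOn.intervalIntegrable
  apply ContinuousOn.zpow₀ (by fun_prop)
  intro x hx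
  rw [Set.uIcc_of_le hT] at hx
  exact Or.inl (by nlinarith [hx.1])

theorem stmt3 (n : ℕ) (hn : 0 < n) :
    ∃ M : ℝ, 0 < M ∧ ∀ c : ℝ, 0 < c →
      1 - ((n:ℝ)+1) * (∫ u in (0:ℝ)..(1/c), (1-c*u)^n/(1+u)^(n+2)) ≤ M * c := by
  refine ⟨(n:ℝ)+2, by positivity, fun c hc => ?_⟩
  set T : ℝ := 1/c with hTdef
  have hT : 0 < T := by positivity
  -- integrability of f
  have hintf : IntervalIntegrable (fun u => (1-c*u)^n/(1+u)^(n+2)) volume 0 T := by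
    apply ContinuousOn.intervalIntegrable
    apply ContinuousOn.div (by fun_prop) (by fun_prop)
    intro x hx
    rw [Set.uIcc_of_le hT.le] at hx
    have : (0:ℝ) < 1 + x := by linarith [hx.1]
    positivity
  by_cases hc1 : c ≤ 1
  · -- main case
    set g : ℝ → ℝ := fun u => ((1:ℝ)+u)^(-((n:ℤ)+1)-1) - (n:ℝ)*c*((1:ℝ)+u)^(-(n:ℤ)-1) with hg
    have hintg : IntervalIntegrable g volume 0 T := by
      apply ContinuousOn.intervalIntegrable
      apply ContinuousOn.sub
      · apply ContinuousOn.zpow₀ (by fun_prop)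
        intro x hx
        rw [Set.uIcc_of_le hT.le] at hx
        exact Or.inl (by nlinarith [hx.1])
      · apply ContinuousOn.mul continuousOn_const
        apply ContinuousOn.zpow₀ (by fun_prop)
        intro x hx
        rw [Set.uIcc_of_le hT.le] at hx
        exact Or.inl (by nlinarith [hx.1])
    have hmono : (∫ u in (0:ℝ)..T, g u) ≤ ∫ u in (0:ℝ)..T, (1-c*u)^n/(1+u)^(n+2) := by
      apply intervalIntegral.integral_mono_on hT.le hintg hintf
      intro u hu
      have hu0 : 0 ≤ u := hu.1
      have hup : (0:ℝ) < 1 + u := by linarith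
      have hcu : c*u ≤ 1 := by
        have : c*u ≤ c*T := mul_le_mul_of_nonneg_left hu.2 hc.le
        calc c*u ≤ c*T := this
        _ = 1 := by rw [hTdef]; exact mul_one_div_cancel hc.ne'
      have hbern : 1 - (n:ℝ)*(c*u) ≤ (1-c*u)^n := by
        have := one_add_mul_le_pow (a := -(c*u)) (by nlinarith) n
        calc 1 - (n:ℝ)*(c*u) = 1 + (n:ℝ)*(-(c*u)) := by ring
        _ ≤ (1 + -(c*u))^n := this
        _ = (1-c*u)^n := by ring_nf
      have hPne : ((1:ℝ)+u)^(n+2) ≠ 0 := by positivity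
      have e1 : ((1:ℝ)+u)^(-((n:ℤ)+1)-1) = 1/(1+u)^(n+2) := by
        rw [one_div, ← zpow_natCast ((1:ℝ)+u) (n+2), ← zpow_neg]
        congr 1
      have e2 : ((1:ℝ)+u)^(-(n:ℤ)-1) = (1+u)/(1+u)^(n+2) := by
        rw [eq_div_iff hPne, ← zpow_natCast ((1:ℝ)+u) (n+2), ← zpow_add₀ hup.ne']
        rw [show (-(n:ℤ)-1) + ((n:ℕ)+2 : ℕ) = 1 by push_cast; ring, zpow_one]
      show g u ≤ _
      rw [hg]
      simp only
      rw [e1, e2]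
      have e3 : 1/(1+u)^(n+2) - (n:ℝ)*c*((1+u)/(1+u)^(n+2))
          = (1 - (n:ℝ)*c*(1+u))/(1+u)^(n+2) := by ring
      rw [e3]
      gcongr
      nlinarith [hbern, mul_nonneg (Nat.cast_nonneg n : (0:ℝ) ≤ n) hc.le]
    -- evaluate ∫ g
    have h1 := ftc_aux (n+1) (by omega) T hT.le
    have h2 := ftc_aux n hn T hT.le
    push_cast at h1
    set E : ℝ := (1+T)^(-((n:ℤ)+1)) with hE
    set F : ℝ := (1+T)^(-(n:ℤ)) with hF
    have hsplit : (∫ u in (0:ℝ)..T, g u) = (1-E)/((n:ℝ)+1) - (n:ℝ)*c*((1-F)/(n:ℝ)) := by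
      rw [hg]
      rw [intervalIntegral.integral_sub ?_ ?_]
      · rw [intervalIntegral.integral_const_mul]
        have e1 : (∫ u in (0:ℝ)..T, ((1:ℝ)+u)^(-((n:ℤ)+1)-1)) = (1-E)/((n:ℝ)+1) := h1
        have e2 : (∫ u in (0:ℝ)..T, ((1:ℝ)+u)^(-(n:ℤ)-1)) = (1-F)/(n:ℝ) := h2
        rw [e1, e2]
      · have := intg_aux (n+1) T hT.le
        push_cast at this
        exact this
      · exact (intg_aux n T hT.le).const_mul _
    have hnR : (1:ℝ) ≤ (n:ℝ) := by exact_mod_cast hn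
    have hval : ((n:ℝ)+1) * (∫ u in (0:ℝ)..T, g u) = (1-E) - ((n:ℝ)+1)*c*(1-F) := by
      rw [hsplit]
      field_simp
    have hTpos : (0:ℝ) < 1 + T := by linarith
    have hFpos : 0 ≤ F := zpow_nonneg hTpos.le _
    have hEc : E ≤ c := by
      have e0 : E = 1/(1+T)^(n+1) := by
        rw [hE, one_div, ← zpow_natCast ((1:ℝ)+T) (n+1), ← zpow_neg]
        congr 1
      have hTn : (0:ℝ) < T^(n+1) := pow_pos hT _
      have e1 : (1:ℝ)/(1+T)^(n+1) ≤ 1/T^(n+1) := by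
        apply one_div_le_one_div_of_le hTn
        exact pow_le_pow_left₀ hT.le (by linarith) _
      have e2 : (1:ℝ)/T^(n+1) = c^(n+1) := by
        rw [hTdef]
        field_simp
        rw [← mul_pow, one_div_mul_cancel hc.ne', one_pow]
      have e3 : c^(n+1) ≤ c := by
        calc c^(n+1) ≤ c^1 := pow_le_pow_of_le_one hc.le hc1 (by omega)
        _ = c := pow_one c
      rw [e0]
      linarith
    have hcF : 0 ≤ ((n:ℝ)+1)*c*F :=
      mul_nonneg (mul_nonneg (by positivity) hc.le) hFpos
    nlinarith [hmono, hval, hEc, hcF, hc.le]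
  · -- c > 1
    push_neg at hc1
    have hI : 0 ≤ ∫ u in (0:ℝ)..T, (1-c*u)^n/(1+u)^(n+2) := by
      apply intervalIntegral.integral_nonneg hT.le
      intro u hu
      have hu0 : 0 ≤ u := hu.1
      have hup : (0:ℝ) < 1 + u := by linarith
      have hcu : c*u ≤ 1 := by
        have : c*u ≤ c*T := mul_le_mul_of_nonneg_left hu.2 hc.le
        calc c*u ≤ c*T := this
        _ = 1 := by rw [hTdef]; exact mul_one_div_cancel hc.ne'
      have h1 : (0:ℝ) ≤ 1 - c*u := by linarith
      positivity
    nlinarith [hI, hn]
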